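/- (Integrating a logarithmic-scale singularity through scattering.) With the scattering setup of the previous statement (velocities bounded by R > 1, δ ∈ (0,1), v_i obtained from (v*,ν*) by the scattering formula), one has ∫ min(δ/|v_i - v_j|, 1) |(v* - v̄_i)·ν*| dv* dν* ≤ C R² δ |log δ| + C R³ δ. -/

import Mathlib

open MeasureTheory Metric
open scoped RealInnerProductSpace

noncomputable section

/-- The plane `ℝ²`. -/
abbrev E2 : Type := EuclideanSpace ℝ (Fin 2)

/-- The surface measure on the unit circle `𝕊¹ ⊂ ℝ²`. -/
def sphμ : Measure (sphere (0 : E2) 1) := (volume : Measure E2).toSphere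

/-- The post-collisional velocity `v_i = v* - ((v* - v̄_i)·ν*) ν*`. -/
def scat (vbar v : E2) (ν : E2) : E2 := v - ⟪v - vbar, ν⟫ • ν

/-! ### Auxiliary material -/

/-- The truncated singular kernel `u ↦ min(δ/|u|, 1)` (in an `if`-form avoiding `δ/0`). -/
def gfun (δ : ℝ) : ℝ → ℝ := fun u => if |u| ≤ δ then 1 else δ / |u|

lemma gfun_nonneg {δ : ℝ} (hδ : 0 < δ) (u : ℝ) : 0 ≤ gfun δ u := by
  unfold gfun; split <;> positivity

lemma gfun_le_one {δ : ℝ} (hδ : 0 < δ) (u : ℝ) : gfun δ u ≤ 1 := by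
  unfold gfun; split
  · exact le_refl _
  · rename_i h
    rw [div_le_one (by push_neg at h; linarith [abs_nonneg u])]
    push_neg at h; linarith

lemma gfun_meas (δ : ℝ) : Measurable (gfun δ) := by
  unfold gfun
  exact Measurable.ite (measurableSet_le (measurable_norm.comp measurable_id) measurable_const)
    measurable_const ((measurable_const.div (measurable_norm.comp measurable_id)))

lemma gfun_even (δ : ℝ) (u : ℝ) : gfun δ (-u) = gfun δ u := by simp [gfun]

lemma gfun_intInt {δ : ℝ} (hδ : 0 < δ) (a b : ℝ) : IntervalIntegrable (gfun δ) volume a b := by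
  apply IntervalIntegrable.mono_fun' (g := fun _ => (1:ℝ)) (intervalIntegrable_const)
  · exact ((gfun_meas δ).aestronglyMeasurable)
  · filter_upwards with u
    rw [Real.norm_eq_abs, abs_of_nonneg (gfun_nonneg hδ u)]
    exact gfun_le_one hδ u

lemma gfun_min_le {δ x u : ℝ} (hδ : 0 < δ) (hx : |u| ≤ x) (h0 : 0 ≤ x) :
    min (δ / x) 1 ≤ gfun δ u := by
  unfold gfun
  split
  · exact min_le_right _ _
  · rename_i h
    push_neg at h
    have hu : 0 < |u| := lt_trans hδ h
    exact le_trans (min_le_left _ _) (div_le_div_of_nonneg_left hδ.le hu hx)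

lemma gfun_integral_bound {δ M : ℝ} (hδ : 0 < δ) (hM : δ ≤ M) :
    ∫ u in (-M)..M, gfun δ u ≤ 2*δ + 2*(δ*(Real.log M - Real.log δ)) := by
  have h1 : ∫ u in (δ)..M, gfun δ u = δ * (Real.log M - Real.log δ) := by
    have : ∀ u ∈ Set.uIcc δ M, gfun δ u = δ * u⁻¹ := by
      intro u hu
      rw [Set.uIcc_of_le hM] at hu
      have h0 : 0 < u := lt_of_lt_of_le hδ hu.1
      unfold gfun
      rcases le_or_gt u δ with h | h
      · have : u = δ := le_antisymm h hu.1
        simp [this, abs_of_pos hδ, le_refl, mul_inv_cancel₀ (ne_of_gt hδ), div_self (ne_of_gt hδ)]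
      · rw [if_neg (by rw [abs_of_pos h0]; linarith), abs_of_pos h0, div_eq_mul_inv]
    rw [intervalIntegral.integral_congr this, intervalIntegral.integral_const_mul,
      integral_inv_of_pos hδ (lt_of_lt_of_le hδ hM), Real.log_div (by linarith) (ne_of_gt hδ)]
  have h2 : ∫ u in (-M)..(-δ), gfun δ u = δ * (Real.log M - Real.log δ) := by
    have := intervalIntegral.integral_comp_neg (a := δ) (b := M) (gfun δ)
    simp only [gfun_even] at this
    rw [← this, h1]
  have h3 : ∫ u in (-δ)..δ, gfun δ u ≤ 2*δ := by
    calc ∫ u in (-δ)..δ, gfun δ u ≤ ∫ u in (-δ)..δ, (1:ℝ) := by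
          apply intervalIntegral.integral_mono_on (by linarith) (gfun_intInt hδ _ _)
            intervalIntegrable_const
          intro u _; exact gfun_le_one hδ u
      _ = 2*δ := by simp; ring
  have hsplit : ∫ u in (-M)..M, gfun δ u =
      (∫ u in (-M)..(-δ), gfun δ u) + (∫ u in (-δ)..δ, gfun δ u) + (∫ u in (δ)..M, gfun δ u) := by
    rw [intervalIntegral.integral_add_adjacent_intervals (gfun_intInt hδ _ _) (gfun_intInt hδ _ _),
      intervalIntegral.integral_add_adjacent_intervals (gfun_intInt hδ _ _) (gfun_intInt hδ _ _)]
  rw [hsplit, h1, h2]; linarith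

open intervalIntegral in
lemma gfun_shift_bound {R δ c : ℝ} (hR : 1 < R) (hδ0 : 0 < δ) (hδ1 : δ < 1) (hc : |c| ≤ R) :
    ∫ t in Set.Ioo (-R) R, gfun δ (t - c) ≤ 2*δ + 2*(δ*(Real.log (2*R) - Real.log δ)) := by
  have h1 : ∫ t in Set.Ioo (-R) R, gfun δ (t - c) = ∫ t in (-R)..R, gfun δ (t - c) := by
    rw [intervalIntegral.integral_of_le (by linarith), integral_Ioc_eq_integral_Ioo]
  have h2 : (∫ t in (-R)..R, gfun δ (t - c)) = ∫ u in (-R - c)..(R - c), gfun δ u :=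
    intervalIntegral.integral_comp_sub_right _ c
  have habs := abs_le.1 hc
  have h3 : (∫ u in (-R - c)..(R - c), gfun δ u) ≤ ∫ u in (-(2*R))..(2*R), gfun δ u := by
    apply intervalIntegral.integral_mono_interval (by linarith) (by linarith) (by linarith)
      (Filter.Eventually.of_forall fun u => gfun_nonneg hδ0 u) (gfun_intInt hδ0 _ _)
  rw [h1, h2]
  exact h3.trans (gfun_integral_bound hδ0 (by linarith))

lemma coord_le_norm (w : EuclideanSpace ℝ (Fin 2)) (i : Fin 2) : |w i| ≤ ‖w‖ := by
  rw [EuclideanSpace.norm_eq]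
  rw [show (∑ j, ‖w j‖ ^ 2) = |w 0|^2 + |w 1|^2 by simp [Fin.sum_univ_two]]
  rw [Real.le_sqrt (abs_nonneg _)]
  fin_cases i <;>
    · simp only [Fin.zero_eta, Fin.mk_one, Fin.isValue]
      nlinarith [sq_nonneg (w 0), sq_nonneg (w 1), abs_nonneg (w 0), abs_nonneg (w 1)]
  positivity

lemma dim2_bound {R δ c : ℝ} (hR : 1 < R) (hδ0 : 0 < δ) (hδ1 : δ < 1) (hc : |c| ≤ R) :
    ∫ w in ball (0 : EuclideanSpace ℝ (Fin 2)) R, (2*R) * gfun δ (w 1 - c) ≤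
      (2*R)*(2*R) * (2*δ + 2*(δ*(Real.log (2*R) - Real.log δ))) := by
  set Θ : EuclideanSpace ℝ (Fin 2) ≃ᵐ ℝ × ℝ :=
    (MeasurableEquiv.toLp 2 (Fin 2 → ℝ)).symm.trans (MeasurableEquiv.piFinTwo fun _ => ℝ) with hΘdef
  have hΘ : MeasurePreserving Θ volume volume := by
    rw [hΘdef]
    exact (volume_preserving_piFinTwo fun _ => ℝ).comp
      (EuclideanSpace.volume_preserving_symm_measurableEquiv_toLp (Fin 2))
  set F : ℝ × ℝ → ℝ := fun z => (2*R) * gfun δ (z.2 - c) with hFdef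
  set s : Set (ℝ × ℝ) := Set.Ioo (-R) R ×ˢ Set.Ioo (-R) R with hsdef
  have hcomp : ∀ w : EuclideanSpace ℝ (Fin 2), F (Θ w) = (2*R) * gfun δ (w 1 - c) := fun w => rfl
  have hFint : IntegrableOn F s volume := by
    rw [hsdef, hFdef, Measure.volume_eq_prod, IntegrableOn, ← Measure.prod_restrict]
    apply Integrable.mul_prod (f := fun _ : ℝ => (2*R)) (g := fun t => gfun δ (t - c))
    · exact integrable_const _
    · apply Integrable.mono' (g := fun _ : ℝ => (1:ℝ)) (integrable_const _)
      · exact ((gfun_meas δ).comp (measurable_id.sub measurable_const)).aestronglyMeasurable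
      · filter_upwards with t
        rw [Real.norm_eq_abs, abs_of_nonneg (gfun_nonneg hδ0 _)]
        exact gfun_le_one hδ0 _
  have hsub : ball (0 : EuclideanSpace ℝ (Fin 2)) R ⊆ Θ ⁻¹' s := by
    intro w hw
    rw [mem_ball, dist_zero_right] at hw
    have h0 := (coord_le_norm w 0).trans_lt hw
    have h1 := (coord_le_norm w 1).trans_lt hw
    constructor
    · exact abs_lt.1 h0  |> fun h => ⟨h.1, h.2⟩
    · exact abs_lt.1 h1  |> fun h => ⟨h.1, h.2⟩
  have hintOn : IntegrableOn (F ∘ Θ) (Θ ⁻¹' s) volume :=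
    (hΘ.integrableOn_comp_preimage Θ.measurableEmbedding).2 hFint
  have step1 : ∫ w in ball (0 : EuclideanSpace ℝ (Fin 2)) R, (2*R) * gfun δ (w 1 - c) ≤
      ∫ w in Θ ⁻¹' s, F (Θ w) := by
    simp_rw [← hcomp]
    exact setIntegral_mono_set hintOn
      (Filter.Eventually.of_forall fun w => by
        have := gfun_nonneg hδ0 ((Θ w).2 - c); positivity)
      (Filter.Eventually.of_forall hsub)
  have step2 : (∫ w in Θ ⁻¹' s, F (Θ w)) = ∫ z in s, F z :=
    hΘ.setIntegral_preimage_emb Θ.measurableEmbedding F s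
  have step3 : (∫ z in s, F z) = (∫ x in Set.Ioo (-R) R, (2*R)) *
      ∫ t in Set.Ioo (-R) R, gfun δ (t - c) := by
    rw [hsdef, hFdef, Measure.volume_eq_prod]
    exact setIntegral_prod_mul (fun _ : ℝ => (2*R)) (fun t => gfun δ (t - c)) _ _
  have h4 : (∫ x in Set.Ioo (-R) R, (2*R) : ℝ) = (2*R)*(2*R) := by
    rw [setIntegral_const, Real.volume_real_Ioo_of_le (by linarith), smul_eq_mul,
      show R - -R = 2*R by ring]
  calc ∫ w in ball (0 : EuclideanSpace ℝ (Fin 2)) R, (2*R) * gfun δ (w 1 - c)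
      ≤ (2*R)*(2*R) * ∫ t in Set.Ioo (-R) R, gfun δ (t - c) := by
        rw [← h4]; exact step1.trans (le_of_eq (step2.trans step3))
    _ ≤ (2*R)*(2*R) * (2*δ + 2*(δ*(Real.log (2*R) - Real.log δ))) := by
        apply mul_le_mul_of_nonneg_left (gfun_shift_bound hR hδ0 hδ1 hc) (by positivity)

lemma inner_coords (x y : E2) : ⟪x, y⟫ = x 0 * y 0 + x 1 * y 1 := by
  simp [PiLp.inner_apply, Fin.sum_univ_two]; ring

/-- The rotation of `ν` by `Real.pi/2`. -/
def perp (ν : E2) : E2 := WithLp.toLp 2 ![-(ν 1), ν 0]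

lemma sq_sum_of_norm_one {ν : E2} (hν : ‖ν‖ = 1) : ν 0 ^ 2 + ν 1 ^ 2 = 1 := by
  have h2 := congrArg (· ^ 2) hν
  rw [EuclideanSpace.norm_eq] at h2
  simp only [Fin.sum_univ_two, Real.norm_eq_abs, sq_abs] at h2
  rwa [Real.sq_sqrt (by positivity), one_pow] at h2

lemma ortho_pair {ν : E2} (hν : ‖ν‖ = 1) : Orthonormal ℝ (![ν, perp ν] : Fin 2 → E2) := by
  have hsum := sq_sum_of_norm_one hν
  rw [orthonormal_iff_ite]
  intro i j
  fin_cases i <;> fin_cases j <;>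
    · simp only [Matrix.cons_val_zero, Matrix.cons_val_one, Matrix.head_cons, inner_coords, perp, PiLp.toLp_apply,
        Fin.mk_zero, Fin.mk_one, if_true, if_false, Fin.isValue]
      norm_num
      nlinarith [hsum]

/-- The orthonormal basis `(ν, ν^⊥)` of the plane. -/
def onb {ν : E2} (hν : ‖ν‖ = 1) : OrthonormalBasis (Fin 2) ℝ E2 :=
  (basisOfOrthonormalOfCardEqFinrank (ortho_pair hν)
    (by simp [finrank_euclideanSpace_fin])).toOrthonormalBasis
    (by rw [coe_basisOfOrthonormalOfCardEqFinrank]; exact ortho_pair hν)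

lemma onb_coe {ν : E2} (hν : ‖ν‖ = 1) : ⇑(onb hν) = ![ν, perp ν] := by
  rw [onb, Module.Basis.coe_toOrthonormalBasis, coe_basisOfOrthonormalOfCardEqFinrank]

lemma perp_norm {ν : E2} (hν : ‖ν‖ = 1) : ‖perp ν‖ = 1 := by
  have := (ortho_pair hν).1 1
  simpa using this

lemma inner_perp {ν : E2} (hν : ‖ν‖ = 1) : ⟪ν, perp ν⟫ = 0 := by
  have := (ortho_pair hν).2 (show (0 : Fin 2) ≠ 1 by decide)
  simpa using this

/-- The total mass of `sphμ` is `2Real.pi`. -/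
lemma sphμ_univ_le : (sphμ Set.univ).toReal ≤ 8 := by
  have h1 : sphμ Set.univ = 2 * volume (ball (0 : E2) 1) := by
    rw [sphμ, Measure.toSphere_apply_univ]
    norm_num [finrank_euclideanSpace_fin]
  have h2 : volume (ball (0 : E2) 1) = ENNReal.ofReal Real.pi := by
    rw [EuclideanSpace.volume_ball]
    simp only [Fintype.card_fin]
    rw [show ((2:ℕ) : ℝ) / 2 + 1 = 2 by norm_num, Real.Gamma_two,
      show Real.sqrt Real.pi ^ 2 = Real.pi from Real.sq_sqrt Real.pi_nonneg]
    simp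
  rw [h1, h2, show (2 : ENNReal) = ENNReal.ofReal 2 by simp, ← ENNReal.ofReal_mul (by norm_num),
    ENNReal.toReal_ofReal (by positivity)]
  nlinarith [Real.pi_le_four]

lemma inner_bound {R δ : ℝ} (hR : 1 < R) (hδ0 : 0 < δ) (hδ1 : δ < 1)
    {vbar vj : E2} (hvbar : ‖vbar‖ ≤ R) (hvj : ‖vj‖ ≤ R) {ν : E2} (hν : ‖ν‖ = 1) :
    (∫ v in ball (0:E2) R, min (δ / ‖scat vbar v ν - vj‖) 1 * |⟪v - vbar, ν⟫| ∂volume)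
      ≤ (2*R)*(2*R) * (2*δ + 2*(δ*(Real.log (2*R) - Real.log δ))) := by
  set p := perp ν with hpdef
  have hp : ‖p‖ = 1 := perp_norm hν
  have hνp : ⟪ν, p⟫ = 0 := inner_perp hν
  set f : E2 → ℝ := fun v => min (δ / ‖scat vbar v ν - vj‖) 1 * |⟪v - vbar, ν⟫| with hfdef
  set h : E2 → ℝ := fun v => (2*R) * gfun δ (⟪v - vj, p⟫) with hhdef
  have hscat_cont : Continuous fun v : E2 => scat vbar v ν := by
    unfold scat
    exact continuous_id.sub
      (((continuous_id.sub continuous_const).inner continuous_const).fun_smul continuous_const)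
  have hinner1_cont : Continuous fun v : E2 => ⟪v - vbar, ν⟫ :=
    (continuous_id.sub continuous_const).inner continuous_const
  have hinner2_cont : Continuous fun v : E2 => ⟪v - vj, p⟫ :=
    (continuous_id.sub continuous_const).inner continuous_const
  have hmin_nonneg : ∀ v : E2, 0 ≤ min (δ / ‖scat vbar v ν - vj‖) 1 := fun v =>
    le_min (div_nonneg hδ0.le (norm_nonneg _)) zero_le_one
  have hf_nonneg : ∀ v : E2, 0 ≤ f v := fun v => mul_nonneg (hmin_nonneg v) (abs_nonneg _)
  have habs2R : ∀ v ∈ ball (0:E2) R, |⟪v - vbar, ν⟫| ≤ 2*R := by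
    intro v hv
    rw [mem_ball, dist_zero_right] at hv
    calc |⟪v - vbar, ν⟫| ≤ ‖v - vbar‖ * ‖ν‖ := abs_real_inner_le_norm _ _
      _ = ‖v - vbar‖ := by rw [hν, mul_one]
      _ ≤ ‖v‖ + ‖vbar‖ := norm_sub_le _ _
      _ ≤ 2*R := by linarith
  have stepA : ∀ v ∈ ball (0:E2) R, f v ≤ h v := by
    intro v hv
    have key1 : ⟪scat vbar v ν - vj, p⟫ = ⟪v - vj, p⟫ := by
      unfold scat
      rw [show v - ⟪v - vbar, ν⟫ • ν - vj = (v - vj) - ⟪v - vbar, ν⟫ • ν by abel,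
        inner_sub_left, real_inner_smul_left, hνp]
      ring
    have key2 : |⟪v - vj, p⟫| ≤ ‖scat vbar v ν - vj‖ := by
      rw [← key1]
      calc |⟪scat vbar v ν - vj, p⟫| ≤ ‖scat vbar v ν - vj‖ * ‖p‖ := abs_real_inner_le_norm _ _
        _ = ‖scat vbar v ν - vj‖ := by rw [hp, mul_one]
    have hmin := gfun_min_le hδ0 key2 (norm_nonneg _)
    calc f v ≤ gfun δ (⟪v - vj, p⟫) * (2*R) :=
          mul_le_mul hmin (habs2R v hv) (abs_nonneg _) (gfun_nonneg hδ0 _)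
      _ = h v := mul_comm _ _
  have hf_meas : Measurable f := by
    apply Measurable.mul
    · exact ((measurable_const.div measurable_id).min measurable_const).comp
        ((hscat_cont.sub continuous_const).norm.measurable)
    · exact hinner1_cont.abs.measurable
  have hh_meas : Measurable h :=
    measurable_const.mul ((gfun_meas δ).comp hinner2_cont.measurable)
  have hf_int : IntegrableOn f (ball (0:E2) R) volume := by
    apply Integrable.mono' (g := fun _ : E2 => 2*R)
      (integrableOn_const measure_ball_lt_top.ne)
      hf_meas.aestronglyMeasurable.restrict
    refine (ae_restrict_iff' measurableSet_ball).2 (ae_of_all _ fun v hv => ?_)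
    rw [Real.norm_eq_abs, abs_of_nonneg (hf_nonneg v)]
    calc f v ≤ 1 * (2*R) :=
          mul_le_mul (min_le_right _ _) (habs2R v hv) (abs_nonneg _) zero_le_one
      _ = 2*R := one_mul _
  have hh_int : IntegrableOn h (ball (0:E2) R) volume := by
    apply Integrable.mono' (g := fun _ : E2 => 2*R)
      (integrableOn_const measure_ball_lt_top.ne)
      hh_meas.aestronglyMeasurable.restrict
    refine (ae_restrict_iff' measurableSet_ball).2 (ae_of_all _ fun v hv => ?_)
    rw [Real.norm_eq_abs, abs_of_nonneg
      (mul_nonneg (by linarith : (0:ℝ) ≤ 2*R) (gfun_nonneg hδ0 _))]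
    calc h v ≤ (2*R) * 1 :=
          mul_le_mul_of_nonneg_left (gfun_le_one hδ0 _) (by linarith)
      _ = 2*R := mul_one _
  have stepC : (∫ v in ball (0:E2) R, f v ∂volume) ≤ ∫ v in ball (0:E2) R, h v ∂volume :=
    setIntegral_mono_on hf_int hh_int measurableSet_ball stepA
  -- change of variables
  set e := (onb hν).repr.symm with hedef
  have hmp : MeasurePreserving e volume volume := (onb hν).measurePreserving_repr_symm
  have hemb : MeasurableEmbedding e := e.toHomeomorph.measurableEmbedding
  have hpre : e ⁻¹' (ball (0:E2) R) = ball (0 : EuclideanSpace ℝ (Fin 2)) R := by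
    rw [e.preimage_ball, map_zero]
  have honb1 : (onb hν) 1 = p := by rw [onb_coe]; rfl
  set c := ⟪vj, p⟫ with hcdef
  have hcR : |c| ≤ R := by
    calc |⟪vj, p⟫| ≤ ‖vj‖ * ‖p‖ := abs_real_inner_le_norm _ _
      _ = ‖vj‖ := by rw [hp, mul_one]
      _ ≤ R := hvj
  have hcomp : ∀ w : EuclideanSpace ℝ (Fin 2), h (e w) = (2*R) * gfun δ (w 1 - c) := by
    intro w
    have : ⟪e w - vj, p⟫ = w 1 - c := by
      rw [inner_sub_left, hcdef]
      congr 1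
      rw [real_inner_comm, ← honb1, ← OrthonormalBasis.repr_apply_apply, hedef,
        LinearIsometryEquiv.apply_symm_apply]
    rw [hhdef]; simp only [this]
  have stepD : (∫ v in ball (0:E2) R, h v ∂volume) =
      ∫ w in ball (0 : EuclideanSpace ℝ (Fin 2)) R, (2*R) * gfun δ (w 1 - c) ∂volume := by
    rw [← hmp.setIntegral_preimage_emb hemb h (ball (0:E2) R), hpre]
    exact setIntegral_congr_fun measurableSet_ball fun w _ => hcomp w
  calc (∫ v in ball (0:E2) R, f v ∂volume)
      ≤ ∫ v in ball (0:E2) R, h v ∂volume := stepC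
    _ = ∫ w in ball (0 : EuclideanSpace ℝ (Fin 2)) R, (2*R) * gfun δ (w 1 - c) ∂volume := stepD
    _ ≤ (2*R)*(2*R) * (2*δ + 2*(δ*(Real.log (2*R) - Real.log δ))) :=
        dim2_bound hR hδ0 hδ1 hcR

/-- Integrating a logarithmic-scale singularity through scattering:
`∫ min(δ/|v_i - v_j|, 1) |(v* - v̄_i)·ν*| dv* dν* ≤ C R² δ |log δ| + C R³ δ`. -/
theorem statement10 :
    ∃ C : ℝ, 0 < C ∧
      ∀ (R δ : ℝ) (vbar vj : E2), 1 < R → 0 < δ → δ < 1 → ‖vbar‖ ≤ R → ‖vj‖ ≤ R →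
        (∫ ν : sphere (0 : E2) 1, ∫ v in Metric.ball (0 : E2) R,
            min (δ / ‖scat vbar v (ν : E2) - vj‖) 1 * |⟪v - vbar, (ν : E2)⟫| ∂volume ∂sphμ)
          ≤ C * R ^ 2 * δ * |Real.log δ| + C * R ^ 3 * δ := by
  refine ⟨200, by norm_num, fun R δ vbar vj hR hδ0 hδ1 hvbar hvj => ?_⟩
  haveI : IsFiniteMeasure sphμ := by unfold sphμ; infer_instance
  set B : ℝ := (2*R)*(2*R) * (2*δ + 2*(δ*(Real.log (2*R) - Real.log δ))) with hBdef
  have hl20 : 0 ≤ Real.log 2 := Real.log_nonneg one_le_two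
  have hl2 : Real.log 2 ≤ 1 := by
    have := Real.log_le_sub_one_of_pos (by norm_num : (0:ℝ) < 2); linarith
  have hlR0 : 0 ≤ Real.log R := Real.log_nonneg hR.le
  have hlR : Real.log R ≤ R - 1 := by
    have := Real.log_le_sub_one_of_pos (by linarith : (0:ℝ) < R); linarith
  have hlδ : Real.log δ < 0 := Real.log_neg hδ0 hδ1
  have hlog2R : Real.log (2*R) = Real.log 2 + Real.log R :=
    Real.log_mul (by norm_num) (by linarith)
  have hB0 : 0 ≤ B := by
    rw [hBdef]
    have : 0 ≤ Real.log (2*R) - Real.log δ := by rw [hlog2R]; linarith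
    have h2δ : 0 ≤ 2*δ := by linarith
    positivity
  have hbound : ∀ ν : sphere (0 : E2) 1,
      ‖∫ v in Metric.ball (0 : E2) R,
        min (δ / ‖scat vbar v (ν : E2) - vj‖) 1 * |⟪v - vbar, (ν : E2)⟫| ∂volume‖ ≤ B := by
    intro ν
    have hν : ‖(ν : E2)‖ = 1 := by
      have := ν.2; rwa [mem_sphere, dist_zero_right] at this
    have hnn : 0 ≤ ∫ v in Metric.ball (0 : E2) R,
        min (δ / ‖scat vbar v (ν : E2) - vj‖) 1 * |⟪v - vbar, (ν : E2)⟫| ∂volume :=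
      setIntegral_nonneg measurableSet_ball fun v _ =>
        mul_nonneg (le_min (div_nonneg hδ0.le (norm_nonneg _)) zero_le_one) (abs_nonneg _)
    rw [Real.norm_eq_abs, abs_of_nonneg hnn]
    exact inner_bound hR hδ0 hδ1 hvbar hvj hν
  have houter : (∫ ν : sphere (0 : E2) 1, ∫ v in Metric.ball (0 : E2) R,
      min (δ / ‖scat vbar v (ν : E2) - vj‖) 1 * |⟪v - vbar, (ν : E2)⟫| ∂volume ∂sphμ)
      ≤ B * (sphμ Set.univ).toReal := by
    refine le_trans (le_abs_self _) ?_
    rw [← Real.norm_eq_abs]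
    exact norm_integral_le_of_norm_le_const (ae_of_all _ hbound)
  have houter2 : B * (sphμ Set.univ).toReal ≤ B * 8 :=
    mul_le_mul_of_nonneg_left sphμ_univ_le hB0
  refine houter.trans (houter2.trans ?_)
  -- final arithmetic
  rw [hBdef, hlog2R, abs_of_neg hlδ]
  set L := -Real.log δ with hLdef
  have hL0 : 0 ≤ L := by rw [hLdef]; linarith
  have hR2δ : (0:ℝ) ≤ R^2 * δ := by positivity
  have t1 : R^2*δ*Real.log R ≤ R^2*δ*(R-1) := mul_le_mul_of_nonneg_left hlR hR2δ
  have t2 : R^2*δ*Real.log 2 ≤ R^2*δ*1 := mul_le_mul_of_nonneg_left hl2 hR2δ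
  have t3 : R^2*δ ≤ R^3*δ := by nlinarith
  have t4 : R^2*δ*L ≤ R^2*δ*L := le_refl _
  nlinarith [mul_nonneg hR2δ hL0, mul_pos (by positivity : (0:ℝ) < R^3) hδ0]
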